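/- Let q_β(z) = ((A−B)/(β+1))·z·₂F₁(1, 1 + 1/β; 2 + 1/β; −Bz) + β/(β+1) + 1/(β+1) for β > 0 and −1 ≤ B < A ≤ 1. Then q_β satisfies the linear ODE q'(z) + q(z)/(βz) = (1/(βz))·((1+Az)/(1+Bz)) on the punctured unit disc (away from z = 0 and z = −1/B). -/

import Mathlib

open Complex

/-- The Gauss hypergeometric series ₂F₁(a,b;c;z). -/
noncomputable def gaussHyp (a b c z : ℂ) : ℂ :=
  ∑' k : ℕ, ((ascPochhammer ℂ k).eval a * (ascPochhammer ℂ k).eval b /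
    ((ascPochhammer ℂ k).eval c * (k.factorial : ℂ))) * z ^ k

lemma ratio_eval (β : ℝ) (hβ : 0 < β) (k : ℕ) :
    (ascPochhammer ℂ k).eval 1 * (ascPochhammer ℂ k).eval (1 + 1/(β:ℂ)) /
      ((ascPochhammer ℂ k).eval (2 + 1/(β:ℂ)) * (k.factorial : ℂ)) =
    ((β:ℂ) + 1) / ((β:ℂ) * (k+1) + 1) := by
  set b : ℂ := (β:ℂ) with hb
  have hb0 : b ≠ 0 := by
    simp only [hb, ne_eq, Complex.ofReal_eq_zero]; exact hβ.ne'
  have hpos : ∀ x : ℝ, 0 < x → ((x:ℂ) ≠ 0) := fun x hx => by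
    simp [Complex.ofReal_eq_zero, hx.ne']
  have claim : ∀ n : ℕ, (ascPochhammer ℂ n).eval (2 + 1/b) * (1 + 1/b)
      = (ascPochhammer ℂ n).eval (1 + 1/b) * (1 + 1/b + n) := by
    intro n
    induction n with
    | zero => simp
    | succ m ih =>
      rw [ascPochhammer_succ_eval, ascPochhammer_succ_eval]
      push_cast
      linear_combination (2 + 1/b + (m:ℂ)) * ih
  have hQ : ∀ n : ℕ, (ascPochhammer ℂ n).eval (2 + 1/b) ≠ 0 := by
    intro n
    induction n with
    | zero => simp
    | succ m ih =>
      rw [ascPochhammer_succ_eval]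
      refine mul_ne_zero ih ?_
      have : (2 + 1/b + (m:ℂ)) = ((2 + 1/β + m : ℝ) : ℂ) := by push_cast [hb]; ring
      rw [this]
      exact hpos _ (by positivity)
  have hfac : (k.factorial : ℂ) ≠ 0 := by exact_mod_cast k.factorial_ne_zero
  have hden : b * (k+1) + 1 ≠ 0 := by
    have : b * (k+1) + 1 = ((β * (k+1) + 1 : ℝ) : ℂ) := by push_cast [hb]; ring
    rw [this]; exact hpos _ (by positivity)
  have hb1 : b + 1 ≠ 0 := by
    have : b + 1 = ((β + 1 : ℝ) : ℂ) := by push_cast [hb]; ring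
    rw [this]; exact hpos _ (by positivity)
  have e : (1:ℂ)/b * b = 1 := by field_simp
  have claim2 : (ascPochhammer ℂ k).eval (2 + 1/b) * (b + 1)
      = (ascPochhammer ℂ k).eval (1 + 1/b) * (b * (k+1) + 1) := by
    linear_combination b * claim k +
      ((ascPochhammer ℂ k).eval (1 + 1/b) - (ascPochhammer ℂ k).eval (2 + 1/b)) * e
  rw [ascPochhammer_eval_one, div_eq_div_iff (mul_ne_zero (hQ k) hfac) hden]
  linear_combination (-(k.factorial : ℂ)) * claim2

theorem stmt_13 (β A B : ℝ) (hβ : 0 < β) (hB : -1 ≤ B) (hBA : B < A) (hA : A ≤ 1)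
    (q : ℂ → ℂ)
    (hq : q = fun z => ((A : ℂ) - B) / (β + 1) * z *
        gaussHyp 1 (1 + 1 / β) (2 + 1 / β) (-(B : ℂ) * z) + (β : ℂ) / (β + 1) + 1 / (β + 1)) :
    ∀ z : ℂ, ‖z‖ < 1 → z ≠ 0 → 1 + (B : ℂ) * z ≠ 0 →
      deriv q z + q z / ((β : ℂ) * z) =
        1 / ((β : ℂ) * z) * ((1 + (A : ℂ) * z) / (1 + (B : ℂ) * z)) := by
  intro z hz hz0 hBz
  have hb0 : ((β:ℂ)) ≠ 0 := by
    simp only [ne_eq, Complex.ofReal_eq_zero]; exact hβ.ne'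
  have hpos : ∀ x : ℝ, 0 < x → ((x:ℂ) ≠ 0) := fun x hx => by
    simp [Complex.ofReal_eq_zero, hx.ne']
  set c : ℕ → ℂ := fun k => ((A:ℂ) - B) * (-(B:ℂ))^k / ((β:ℂ)*(k+1)+1) with hc
  have hdenR : ∀ k : ℕ, (0:ℝ) < β*(k+1)+1 := fun k => by positivity
  have hdenC : ∀ k : ℕ, (β:ℂ)*(k+1)+1 = ((β*(k+1)+1 : ℝ) : ℂ) := fun k => by push_cast; ring
  have hden : ∀ k : ℕ, (β:ℂ)*(k+1)+1 ≠ 0 := fun k => by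
    rw [hdenC k]; exact hpos _ (hdenR k)
  have hb1 : ((β:ℂ)) + 1 ≠ 0 := by
    have : ((β:ℂ)) + 1 = ((β + 1 : ℝ) : ℂ) := by push_cast; ring
    rw [this]; exact hpos _ (by positivity)
  have hB1 : |B| ≤ 1 := abs_le.mpr ⟨hB, le_of_lt (lt_of_lt_of_le hBA hA)⟩
  -- q as a power series
  have hqs : q = fun w => (∑' k : ℕ, c k * w^(k+1)) + 1 := by
    rw [hq]; funext w
    have h2 : gaussHyp 1 (1 + 1/(β:ℂ)) (2 + 1/(β:ℂ)) (-(B:ℂ)*w)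
        = ∑' k : ℕ, ((β:ℂ)+1)/((β:ℂ)*(k+1)+1) * (-(B:ℂ)*w)^k := by
      unfold gaussHyp
      exact tsum_congr fun k => by rw [ratio_eval β hβ k]
    rw [h2, ← tsum_mul_left]
    have h3 : (∑' k : ℕ, ((A:ℂ) - B) / ((β:ℂ) + 1) * w *
        (((β:ℂ)+1)/((β:ℂ)*(k+1)+1) * (-(B:ℂ)*w)^k)) = ∑' k : ℕ, c k * w^(k+1) := by
      refine tsum_congr fun k => ?_
      rw [hc]
      have hd := hden k
      field_simp
      ring
    rw [h3, add_assoc]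
    congr 1
    field_simp
  -- norm of coefficients
  have normc : ∀ k : ℕ, ‖c k‖ = |A - B| * |B|^k / (β*(k+1)+1) := by
    intro k
    rw [hc]
    simp only [norm_div, norm_mul, norm_pow, norm_neg]
    rw [hdenC k]
    rw [show ((A:ℂ) - B) = ((A - B : ℝ) : ℂ) by push_cast; ring]
    rw [Complex.norm_real, Complex.norm_real, Complex.norm_real]
    rw [Real.norm_eq_abs, Real.norm_eq_abs, Real.norm_eq_abs, abs_of_pos (hdenR k)]
  -- termwise derivative bound
  have hbnd : ∀ (y : ℂ) (n : ℕ),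
      ‖c n * (((n:ℕ)+1 : ℂ) * y^n)‖ ≤ |A - B|/β * (‖y‖)^n := by
    intro y n
    have h1 : ‖c n * (((n:ℕ)+1 : ℂ) * y^n)‖ = ‖c n‖ * ((n:ℝ)+1) * (‖y‖)^n := by
      simp only [norm_mul, norm_pow]
      rw [show (((n:ℕ)+1 : ℂ)) = (((n:ℝ)+1 : ℝ) : ℂ) by push_cast; ring]
      rw [Complex.norm_real, Real.norm_eq_abs, abs_of_pos (by positivity)]
      ring
    rw [h1]
    have h2 : ‖c n‖ * ((n:ℝ)+1) ≤ |A - B|/β := by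
      rw [normc n, div_mul_eq_mul_div, div_le_div_iff₀ (hdenR n) hβ]
      have hBn : |B|^n ≤ 1 := pow_le_one₀ (abs_nonneg _) hB1
      have key := mul_nonneg (mul_nonneg (abs_nonneg (A-B)) (sub_nonneg.mpr hBn))
        (by positivity : (0:ℝ) ≤ β*((n:ℝ)+1))
      nlinarith [abs_nonneg (A-B)]
    exact mul_le_mul_of_nonneg_right h2 (by positivity)
  have hcle : ∀ k : ℕ, ‖c k‖ ≤ |A - B| := by
    intro k
    rw [normc k]
    have hBn : |B|^k ≤ 1 := pow_le_one₀ (abs_nonneg _) hB1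
    have h1 : |A - B| * |B|^k ≤ |A - B| * 1 := by
      exact mul_le_mul_of_nonneg_left hBn (abs_nonneg _)
    have h2 : |A - B| * |B|^k / (β*(k+1)+1) ≤ |A - B| * |B|^k / 1 := by
      apply div_le_div_of_nonneg_left ?_ one_pos ?_ <;> nlinarith [abs_nonneg (A-B), pow_nonneg (abs_nonneg B) k]
    calc |A - B| * |B|^k / (β*(k+1)+1) ≤ |A - B| * |B|^k / 1 := h2
      _ = |A - B| * |B|^k := by ring
      _ ≤ |A - B| := by nlinarith [abs_nonneg (A-B)]
  -- the derivative
  have hder : HasDerivAt (fun w => ∑' k : ℕ, c k * w^(k+1))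
      (∑' k : ℕ, c k * (((k:ℕ)+1 : ℂ) * z^k)) z := by
    set r : ℝ := (1 + ‖z‖)/2 with hr
    have habs : 0 ≤ ‖z‖ := norm_nonneg z
    have hr0 : 0 < r := by positivity
    have hr1 : r < 1 := by simp only [hr]; linarith
    have hzr : ‖z‖ < r := by simp only [hr]; linarith
    apply hasDerivAt_tsum_of_isPreconnected
      (u := fun k => |A - B|/β * r^k)
      (g := fun n w => c n * w^(n+1))
      (g' := fun n y => c n * (((n:ℕ)+1 : ℂ) * y^n))
      (y₀ := 0) (t := Metric.ball (0:ℂ) r)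
    · exact (summable_geometric_of_lt_one hr0.le hr1).mul_left _
    · exact Metric.isOpen_ball
    · exact (convex_ball _ _).isPreconnected
    · intro n y _
      exact (hasDerivAt_pow (n+1) y).const_mul (c n) |>.congr_deriv (by push_cast; ring)
    · intro n y hy
      refine le_trans (hbnd y n) ?_
      have : ‖y‖ ≤ r := by
        rw [Metric.mem_ball, dist_zero_right] at hy
        exact le_of_lt hy
      have := pow_le_pow_left₀ (norm_nonneg y) this n
      have hAB : 0 ≤ |A - B|/β := by positivity
      exact mul_le_mul_of_nonneg_left this hAB
    · exact Metric.mem_ball_self hr0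
    · have h0 : (fun n : ℕ => c n * (0:ℂ)^(n+1)) = fun _ => 0 := by
        funext n; simp [zero_pow (Nat.succ_ne_zero n)]
      rw [h0]; exact summable_zero
    · rw [Metric.mem_ball, dist_zero_right]
      exact hzr
  -- summabilities at z
  have hzn : ‖z‖ < 1 := hz
  have sum2 : Summable (fun k : ℕ => c k * (((k:ℕ)+1 : ℂ) * z^k)) := by
    apply Summable.of_norm_bounded (g := fun k => |A - B|/β * (‖z‖)^k)
      ((summable_geometric_of_lt_one (norm_nonneg z) hz).mul_left _)
    exact fun k => hbnd z k
  have sum1 : Summable (fun k : ℕ => c k * z^(k+1)) := by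
    apply Summable.of_norm_bounded (g := fun k => |A - B| * (‖z‖)^k)
      ((summable_geometric_of_lt_one (norm_nonneg z) hz).mul_left _)
    intro k
    rw [norm_mul, norm_pow]
    have h1 : (‖z‖)^(k+1) ≤ (‖z‖)^k :=
      pow_le_pow_of_le_one (norm_nonneg z) (le_of_lt hz) (Nat.le_succ k)
    exact mul_le_mul (hcle k) h1 (by positivity) (abs_nonneg _)
  have sum2' : Summable (fun k : ℕ => ((β:ℂ)*z) * (c k * (((k:ℕ)+1:ℂ) * z^k))) :=
    sum2.mul_left _
  -- geometric series
  have geo : ∑' k : ℕ, (-(B:ℂ)*z)^k = (1 + (B:ℂ)*z)⁻¹ := by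
    have hn : ‖-(B:ℂ)*z‖ < 1 := by
      rw [norm_mul, norm_neg, Complex.norm_real, Real.norm_eq_abs]
      nlinarith [norm_nonneg z, abs_nonneg B]
    rw [tsum_geometric_of_norm_lt_one hn]
    congr 1
    ring
  -- key identity
  have key : (β:ℂ)*z * (∑' k : ℕ, c k * (((k:ℕ)+1:ℂ) * z^k)) + ((∑' k : ℕ, c k * z^(k+1)) + 1)
      = (1 + (A:ℂ)*z)/(1 + (B:ℂ)*z) := by
    rw [← tsum_mul_left, ← add_assoc, ← Summable.tsum_add sum2' sum1]
    have h4 : (∑' k : ℕ, (((β:ℂ)*z) * (c k * (((k:ℕ)+1:ℂ) * z^k)) + c k * z^(k+1)))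
        = ∑' k : ℕ, (((A:ℂ)-B)*z) * (-(B:ℂ)*z)^k := by
      refine tsum_congr fun k => ?_
      have hck : ((β:ℂ)*(k+1)+1) * c k = ((A:ℂ)-B) * (-(B:ℂ))^k := by
        simp only [hc]
        have := hden k
        field_simp
      linear_combination z^(k+1) * hck
    rw [h4, tsum_mul_left, geo]
    rw [eq_div_iff hBz]
    field_simp
    ring
  -- finish
  have hbz : (β:ℂ)*z ≠ 0 := mul_ne_zero hb0 hz0
  simp only [hqs]
  rw [(hder.add_const 1).deriv]
  set S1 : ℂ := ∑' (k : ℕ), c k * (((k:ℕ)+1 : ℂ) * z ^ k) with hS1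
  set S0 : ℂ := ∑' (k : ℕ), c k * z ^ (k + 1) with hS0
  rw [← key]
  field_simp
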